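/- Let v, w ∈ ℝ^N be unit vectors with ‖v vᵀ - w wᵀ‖ ≤ ε in operator norm, ε < 1/2, and suppose |w_j| ≥ m > 0 and |w_i| ≤ 1 for indices i, j. Then, after choosing the sign of v so that ⟨v, w⟩ ≥ 0, we have |v_i/v_j - w_i/w_j| ≤ C ε / m² for an absolute constant C, provided ε is small enough that |v_j| ≥ m/2. -/

import Mathlib

/-- The ℓ²→ℓ² operator (spectral) norm of a square real matrix. -/
noncomputable def opNorm {N : ℕ} (M : Matrix (Fin N) (Fin N) ℝ) : ℝ :=
  ‖Matrix.toEuclideanCLM (𝕜 := ℝ) M‖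

/-- Quantitative component-ratio stability: if the rank-one projections of unit
vectors `v, w` are `ε`-close in operator norm (`ε < 1/2`), the signs are aligned
(`⟨v,w⟩ ≥ 0`), `|w j| ≥ m > 0`, `|w i| ≤ 1` and `|v j| ≥ m/2`, then the
component ratios satisfy `|v i / v j - w i / w j| ≤ 8 ε / m²`. -/
theorem component_ratio_perturbation {N : ℕ} (v w : Fin N → ℝ) (i j : Fin N)
    (m ε : ℝ)
    (hv : ∑ k, v k ^ 2 = 1) (hw : ∑ k, w k ^ 2 = 1)
    (hε0 : 0 ≤ ε) (hε : ε < 1/2)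
    (hclose : opNorm (Matrix.vecMulVec v v - Matrix.vecMulVec w w) ≤ ε)
    (hm : 0 < m) (hwj : m ≤ |w j|) (hwi : |w i| ≤ 1)
    (hsign : 0 ≤ ∑ k, v k * w k)
    (hvj : m / 2 ≤ |v j|) :
    |v i / v j - w i / w j| ≤ 8 * ε / m ^ 2 := by
  classical
  set c : ℝ := ∑ k, v k * w k with hc
  set A := Matrix.vecMulVec v v - Matrix.vecMulVec w w with hA
  have hmul : Matrix.toLin' A w = fun k => c * v k - w k := by
    funext k
    rw [Matrix.toLin'_apply, hA, Matrix.sub_mulVec]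
    have h1 : (Matrix.vecMulVec v v).mulVec w k = c * v k := by
      simp only [Matrix.mulVec, dotProduct, Matrix.vecMulVec_apply, hc, Finset.sum_mul,
        Finset.mul_sum]
      exact Finset.sum_congr rfl (fun x _ => by ring)
    have h2 : (Matrix.vecMulVec w w).mulVec w k = w k := by
      simp only [Matrix.mulVec, dotProduct, Matrix.vecMulVec_apply]
      have : ∀ x, w k * w x * w x = w k * w x ^ 2 := fun x => by ring
      simp_rw [this, ← Finset.mul_sum, hw, mul_one]
    simp [h1, h2]
  have hwnorm : ‖(WithLp.equiv 2 (Fin N → ℝ)).symm w‖ = 1 := by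
    rw [EuclideanSpace.norm_eq]
    simp only [WithLp.equiv_symm_apply, WithLp.ofLp_toLp, Real.norm_eq_abs, sq_abs, hw, Real.sqrt_one]
  have hAw : ‖(WithLp.equiv 2 (Fin N → ℝ)).symm (fun k => c * v k - w k)‖ ≤ ε := by
    rw [← hmul, show (WithLp.equiv 2 (Fin N → ℝ)).symm (Matrix.toLin' A w) =
      Matrix.toEuclideanCLM (𝕜 := ℝ) A ((WithLp.equiv 2 (Fin N → ℝ)).symm w) from rfl]
    calc ‖Matrix.toEuclideanCLM (𝕜 := ℝ) A ((WithLp.equiv 2 (Fin N → ℝ)).symm w)‖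
        ≤ ‖Matrix.toEuclideanCLM (𝕜 := ℝ) A‖ * ‖(WithLp.equiv 2 (Fin N → ℝ)).symm w‖ :=
          (Matrix.toEuclideanCLM (𝕜 := ℝ) A).le_opNorm _
      _ ≤ ε := by rw [hwnorm, mul_one]; exact hclose
  -- squared norm
  have hsq : ∑ k, (c * v k - w k) ^ 2 ≤ ε ^ 2 := by
    have h1 : Real.sqrt (∑ k, (c * v k - w k) ^ 2) ≤ ε := by
      rw [EuclideanSpace.norm_eq] at hAw
      simpa [Real.norm_eq_abs, sq_abs] using hAw
    have h2 : Real.sqrt (∑ k, (c * v k - w k) ^ 2) ^ 2 = ∑ k, (c * v k - w k) ^ 2 :=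
      Real.sq_sqrt (Finset.sum_nonneg fun k _ => sq_nonneg _)
    nlinarith [Real.sqrt_nonneg (∑ k, (c * v k - w k) ^ 2)]
  have hexp : ∑ k, (c * v k - w k) ^ 2 = 1 - c ^ 2 := by
    have : ∀ k, (c * v k - w k) ^ 2 = c^2 * v k ^2 - 2*c*(v k * w k) + w k ^2 := by
      intro k; ring
    simp_rw [this, Finset.sum_add_distrib, Finset.sum_sub_distrib, ← Finset.mul_sum, hv, hw, ← hc]
    ring
  have hkey : 1 - c ^ 2 ≤ ε ^ 2 := hexp ▸ hsq
  have hc1 : c ≤ 1 := by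
    have hcs := Finset.sum_mul_sq_le_sq_mul_sq Finset.univ v w
    rw [hv, hw, one_mul] at hcs
    nlinarith
  -- difference bound
  have hdiff : ∀ k, (v k - w k) ^ 2 ≤ 2 * ε ^ 2 := by
    intro k
    have hsum : ∑ l, (v l - w l) ^ 2 = 2 - 2 * c := by
      have : ∀ l, (v l - w l) ^ 2 = v l ^ 2 - 2 * (v l * w l) + w l ^ 2 := by intro l; ring
      simp_rw [this, Finset.sum_add_distrib, Finset.sum_sub_distrib, ← Finset.mul_sum, hv, hw, ← hc]
      ring
    have hle : (v k - w k) ^ 2 ≤ ∑ l, (v l - w l) ^ 2 :=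
      Finset.single_le_sum (f := fun l => (v l - w l) ^ 2) (fun l _ => sq_nonneg _)
        (Finset.mem_univ k)
    nlinarith
  have hdi : |v i - w i| ≤ 2 * ε := by
    nlinarith [hdiff i, sq_abs (v i - w i), abs_nonneg (v i - w i)]
  have hdj : |v j - w j| ≤ 2 * ε := by
    nlinarith [hdiff j, sq_abs (v j - w j), abs_nonneg (v j - w j)]
  -- final ratio bound
  have hwj1 : |w j| ≤ 1 := by
    have : w j ^ 2 ≤ 1 := hw ▸ Finset.single_le_sum (f := fun l => w l ^ 2)
      (fun l _ => sq_nonneg _) (Finset.mem_univ j)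
    nlinarith [abs_nonneg (w j), sq_abs (w j)]
  have hvj0 : v j ≠ 0 := by
    intro h; rw [h, abs_zero] at hvj; linarith
  have hwj0 : w j ≠ 0 := by
    intro h; rw [h, abs_zero] at hwj; linarith
  rw [div_sub_div _ _ hvj0 hwj0, abs_div, abs_mul]
  have hnum : |v i * w j - v j * w i| ≤ 4 * ε := by
    have heq : v i * w j - v j * w i = (v i - w i) * w j + w i * (w j - v j) := by ring
    rw [heq]
    have hdj' : |w j - v j| ≤ 2 * ε := by rwa [abs_sub_comm]
    calc |(v i - w i) * w j + w i * (w j - v j)|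
        ≤ |(v i - w i) * w j| + |w i * (w j - v j)| := abs_add_le _ _
      _ = |v i - w i| * |w j| + |w i| * |w j - v j| := by rw [abs_mul, abs_mul]
      _ ≤ (2*ε) * 1 + 1 * (2*ε) := by
          apply add_le_add
          · exact mul_le_mul hdi hwj1 (abs_nonneg _) (by linarith)
          · exact mul_le_mul hwi hdj' (abs_nonneg _) zero_le_one
      _ = 4 * ε := by ring
  have hden : m^2 / 2 ≤ |v j| * |w j| := by
    calc m^2/2 = (m/2) * m := by ring
      _ ≤ |v j| * |w j| := mul_le_mul hvj hwj (le_of_lt hm) (abs_nonneg _)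
  have hden0 : (0:ℝ) < m^2/2 := by positivity
  calc |v i * w j - v j * w i| / (|v j| * |w j|)
      ≤ (4 * ε) / (m^2/2) := div_le_div₀ (by linarith) hnum hden0 hden
    _ = 8 * ε / m ^ 2 := by field_simp; ring
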